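/- Let β > 0 and let Ψ = P_RMGSS⁻¹ 𝒜. Every eigenvalue λ ∈ ℂ of Ψ (regarded as a complex matrix) is real and satisfies 0 < λ ≤ 1; moreover, each eigenvalue λ satisfies either λ = 1 or |λ − 1| = β/(β + μ) for some eigenvalue μ > 0 of G = C + B A⁻¹ Bᵀ. -/

import Mathlib

open Matrix

lemma transpose_mulVec_inj {m n : ℕ} (B : Matrix (Fin m) (Fin n) ℝ)
    (hB : B.rank = m) : ∀ v : Fin m → ℝ, Bᵀ *ᵥ v = 0 → v = 0 := by
  rw [← Matrix.ker_mulVecLin_eq_bot_iff]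
  have hrank : Bᵀ.rank = m := by rw [Matrix.rank_transpose]; exact hB
  have h := (Bᵀ.mulVecLin).finrank_range_add_finrank_ker
  rw [Matrix.rank] at hrank
  rw [hrank] at h
  simp only [Module.finrank_pi, Fintype.card_fin] at h
  have : Module.finrank ℝ (LinearMap.ker Bᵀ.mulVecLin) = 0 := by omega
  exact Submodule.finrank_eq_zero.mp this

lemma G_posdef {m n : ℕ} (A : Matrix (Fin n) (Fin n) ℝ) (B : Matrix (Fin m) (Fin n) ℝ)
    (C : Matrix (Fin m) (Fin m) ℝ) (hA : A.PosDef) (hC : C.PosSemidef)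
    (hB : B.rank = m) : (C + B * A⁻¹ * Bᵀ).PosDef := by
  have hAinv : (A⁻¹).PosDef := hA.inv
  refine Matrix.PosDef.of_dotProduct_mulVec_pos ?_ ?_
  · have h1 : Matrix.IsHermitian (B * A⁻¹ * Bᵀ) := by
      have hBB : Bᵀᴴ = B := by ext i j; simp [Matrix.conjTranspose_apply]
      have := Matrix.isHermitian_conjTranspose_mul_mul Bᵀ hAinv.isHermitian
      rwa [hBB] at this
    exact hC.isHermitian.add h1
  · intro v hv
    have hw : Bᵀ *ᵥ v ≠ 0 := fun h => hv (transpose_mulVec_inj B hB v h)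
    have h1 : 0 ≤ star v ⬝ᵥ (C *ᵥ v) := hC.dotProduct_mulVec_nonneg v
    have h2 : 0 < star v ⬝ᵥ ((B * A⁻¹ * Bᵀ) *ᵥ v) := by
      have : star v ⬝ᵥ ((B * A⁻¹ * Bᵀ) *ᵥ v) = star (Bᵀ *ᵥ v) ⬝ᵥ (A⁻¹ *ᵥ (Bᵀ *ᵥ v)) := by
        rw [← Matrix.mulVec_mulVec, ← Matrix.mulVec_mulVec, Matrix.dotProduct_mulVec,
          ← Matrix.mulVec_transpose]
        simp [star]
      rw [this]
      exact hAinv.dotProduct_mulVec_pos hw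
    rw [Matrix.add_mulVec, dotProduct_add]
    linarith

lemma real_eig {m : ℕ} (G : Matrix (Fin m) (Fin m) ℝ) (hG : G.PosDef)
    (y : Fin m → ℂ) (hy : y ≠ 0) (ν : ℂ)
    (hνy : (G.map Complex.ofReal) *ᵥ y = ν • y) :
    ν.im = 0 ∧ 0 < ν.re ∧ ∃ v : Fin m → ℝ, v ≠ 0 ∧ G *ᵥ v = ν.re • v := by
  classical
  set p : Fin m → ℝ := fun i => (y i).re with hp
  set q : Fin m → ℝ := fun i => (y i).im with hq
  set z : Fin m → ℂ := (G.map Complex.ofReal) *ᵥ y with hz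
  have hzre : ∀ i, (z i).re = (G *ᵥ p) i := by
    intro i
    simp only [hz, Matrix.mulVec, dotProduct, Matrix.map_apply, Complex.re_sum,
      Complex.mul_re, Complex.ofReal_re, Complex.ofReal_im, zero_mul, sub_zero]
    rfl
  have hzim : ∀ i, (z i).im = (G *ᵥ q) i := by
    intro i
    simp only [hz, Matrix.mulVec, dotProduct, Matrix.map_apply, Complex.im_sum,
      Complex.mul_im, Complex.ofReal_re, Complex.ofReal_im, zero_mul, add_zero]
    rfl
  have hGsymm : Gᵀ = G := by
    have h := hG.isHermitian.eq
    rwa [Matrix.conjTranspose_eq_transpose_of_trivial] at h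
  have hsymmdot : p ⬝ᵥ (G *ᵥ q) = q ⬝ᵥ (G *ᵥ p) := by
    rw [Matrix.dotProduct_mulVec, ← Matrix.mulVec_transpose, hGsymm, dotProduct_comm]
  -- the quadratic form value
  set a : ℂ := star y ⬝ᵥ z with ha
  have hare : a.re = p ⬝ᵥ (G *ᵥ p) + q ⬝ᵥ (G *ᵥ q) := by
    have : a.re = ∑ i, (p i * (z i).re + q i * (z i).im) := by
      simp only [ha, dotProduct, Complex.re_sum, Pi.star_apply, Complex.star_def,
        Complex.mul_re, Complex.conj_re, Complex.conj_im]
      congr 1; ext i; ring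
    rw [this]
    simp only [dotProduct, Finset.sum_add_distrib]
    congr 1 <;> (congr 1; ext i) <;> [rw [hzre i]; rw [hzim i]]
  have haim : a.im = 0 := by
    have : a.im = ∑ i, (p i * (z i).im - q i * (z i).re) := by
      simp only [ha, dotProduct, Complex.im_sum, Pi.star_apply, Complex.star_def,
        Complex.mul_im, Complex.conj_re, Complex.conj_im]
      congr 1; ext i; ring
    rw [this]
    have : ∀ i, p i * (z i).im - q i * (z i).re = p i * (G *ᵥ q) i - q i * (G *ᵥ p) i := by
      intro i; rw [hzre i, hzim i]
    rw [Finset.sum_congr rfl (fun i _ => this i), Finset.sum_sub_distrib]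
    have h1 : ∑ i, p i * (G *ᵥ q) i = p ⬝ᵥ (G *ᵥ q) := rfl
    have h2 : ∑ i, q i * (G *ᵥ p) i = q ⬝ᵥ (G *ᵥ p) := rfl
    rw [h1, h2, hsymmdot, sub_self]
  set s : ℝ := ∑ i, Complex.normSq (y i) with hs
  have hspos : 0 < s := by
    obtain ⟨i, hi⟩ := Function.ne_iff.mp hy
    refine Finset.sum_pos' (fun j _ => Complex.normSq_nonneg _) ⟨i, Finset.mem_univ i, ?_⟩
    exact Complex.normSq_pos.mpr hi
  have hat : a = ν * (s : ℂ) := by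
    rw [ha, ← hz] at *
    rw [show star y ⬝ᵥ z = star y ⬝ᵥ (ν • y) by rw [← hνy]]
    rw [dotProduct_smul]
    have : star y ⬝ᵥ y = (s : ℂ) := by
      simp only [dotProduct, Pi.star_apply, Complex.star_def, hs, Complex.ofReal_sum]
      congr 1; ext i
      rw [Complex.normSq_eq_conj_mul_self]
    rw [this, smul_eq_mul]
  have hnuim : ν.im = 0 := by
    have : a.im = ν.im * s := by rw [hat]; simp [Complex.mul_im]
    rw [haim] at this
    have := this.symm
    rcases mul_eq_zero.mp this with h | h
    · exact h
    · exact absurd h hspos.ne'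
  have hnure : a.re = ν.re * s := by rw [hat]; simp [Complex.mul_re]
  -- eigenvector equations
  have hzi : ∀ i, z i = ν * y i := fun i => congrFun hνy i
  have heigp : G *ᵥ p = ν.re • p := by
    funext i
    rw [← hzre i]
    rw [hzi i]
    simp [Complex.mul_re, hnuim, hp]
  have heigq : G *ᵥ q = ν.re • q := by
    funext i
    rw [← hzim i]
    rw [hzi i]
    simp [Complex.mul_im, hnuim, hq]
  have hpq : p ≠ 0 ∨ q ≠ 0 := by
    by_contra h
    push_neg at h
    apply hy
    funext i
    have h1 : p i = 0 := congrFun h.1 i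
    have h2 : q i = 0 := congrFun h.2 i
    exact Complex.ext h1 h2
  have hdotnn : ∀ v : Fin m → ℝ, 0 ≤ v ⬝ᵥ (G *ᵥ v) := by
    intro v
    have := hG.posSemidef.dotProduct_mulVec_nonneg v
    simpa using this
  have hdotpos : ∀ v : Fin m → ℝ, v ≠ 0 → 0 < v ⬝ᵥ (G *ᵥ v) := by
    intro v hv
    have := hG.dotProduct_mulVec_pos hv
    simpa using this
  have hapos : 0 < a.re := by
    rw [hare]
    rcases hpq with h | h
    · have := hdotpos p h; have := hdotnn q; linarith
    · have := hdotpos q h; have := hdotnn p; linarith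
  have hnupos : 0 < ν.re := by
    by_contra h
    push_neg at h
    nlinarith [hnure, hapos, hspos]
  refine ⟨hnuim, hnupos, ?_⟩
  rcases hpq with h | h
  · exact ⟨p, h, heigp⟩
  · exact ⟨q, h, heigq⟩

lemma map_mul_ofReal {k l r : Type*} [Fintype l] (M : Matrix k l ℝ) (N : Matrix l r ℝ) :
    (M * N).map Complex.ofReal = M.map Complex.ofReal * N.map Complex.ofReal := by
  ext i j
  simp [Matrix.mul_apply, Matrix.map_apply]

lemma map_det_ofReal {k : Type*} [Fintype k] [DecidableEq k] (M : Matrix k k ℝ) :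
    (M.map Complex.ofReal).det = (M.det : ℂ) :=
  (RingHom.map_det Complex.ofRealHom M).symm

theorem RMGSS_preconditioned_eigenvalues
    (n m : ℕ) (hn : 0 < n) (hm : 0 < m) (hmn : m ≤ n)
    (A : Matrix (Fin n) (Fin n) ℝ) (B : Matrix (Fin m) (Fin n) ℝ)
    (C : Matrix (Fin m) (Fin m) ℝ)
    (hA : A.PosDef) (hC : C.PosSemidef) (hB : B.rank = m)
    (β : ℝ) (hβ : 0 < β)
    (G : Matrix (Fin m) (Fin m) ℝ) (hG : G = C + B * A⁻¹ * Bᵀ)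
    (Ψ : Matrix (Fin n ⊕ Fin m) (Fin n ⊕ Fin m) ℝ)
    (hΨ : Ψ = (Matrix.fromBlocks A Bᵀ (-B)
        (β • (1 : Matrix (Fin m) (Fin m) ℝ) + C))⁻¹ *
      Matrix.fromBlocks A Bᵀ (-B) C) :
    ∀ lam : ℂ, ∀ u : Fin n ⊕ Fin m → ℂ, u ≠ 0 →
      (Ψ.map Complex.ofReal) *ᵥ u = lam • u →
      lam.im = 0 ∧ 0 < lam.re ∧ lam.re ≤ 1 ∧
      (lam = 1 ∨ ∃ μ : ℝ, 0 < μ ∧ (∃ v : Fin m → ℝ, v ≠ 0 ∧ G *ᵥ v = μ • v) ∧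
        ‖lam - 1‖ = β / (β + μ)) := by
  intro lam u hu0 hu
  have hGpd : G.PosDef := hG ▸ G_posdef A B C hA hC hB
  -- P is invertible
  set P : Matrix (Fin n ⊕ Fin m) (Fin n ⊕ Fin m) ℝ :=
    Matrix.fromBlocks A Bᵀ (-B) (β • (1 : Matrix (Fin m) (Fin m) ℝ) + C) with hP
  have hAdet : IsUnit A.det := isUnit_iff_ne_zero.mpr hA.det_pos.ne'
  haveI : Invertible A := A.invertibleOfIsUnitDet hAdet
  have hSchurPD : (β • (1 : Matrix (Fin m) (Fin m) ℝ) + G).PosDef := by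
    have h1 : (β • (1 : Matrix (Fin m) (Fin m) ℝ)).PosDef := by
      rw [Matrix.smul_one_eq_diagonal]
      exact Matrix.PosDef.diagonal (fun _ => hβ)
    exact h1.add_posSemidef hGpd.posSemidef
  have hPdet : IsUnit P.det := by
    rw [hP, Matrix.det_fromBlocks₁₁]
    have hschur : β • (1 : Matrix (Fin m) (Fin m) ℝ) + C - (-B) * ⅟A * Bᵀ
        = β • (1 : Matrix (Fin m) (Fin m) ℝ) + G := by
      rw [Matrix.invOf_eq_nonsing_inv, hG]
      simp only [Matrix.neg_mul, sub_neg_eq_add]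
      abel
    rw [hschur]
    exact isUnit_iff_ne_zero.mpr (mul_ne_zero hA.det_pos.ne' hSchurPD.det_pos.ne')
  have hPΨ : P * Ψ = Matrix.fromBlocks A Bᵀ (-B) C := by
    rw [hΨ, ← Matrix.mul_assoc, Matrix.mul_nonsing_inv _ hPdet, Matrix.one_mul]
  -- complexify
  have hmul : (P.map Complex.ofReal) * (Ψ.map Complex.ofReal)
      = (Matrix.fromBlocks A Bᵀ (-B) C).map Complex.ofReal := by
    rw [← map_mul_ofReal, hPΨ]
  have hvec : (Matrix.fromBlocks A Bᵀ (-B) C).map Complex.ofReal *ᵥ u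
      = lam • ((P.map Complex.ofReal) *ᵥ u) := by
    rw [← hmul, ← Matrix.mulVec_mulVec, hu, Matrix.mulVec_smul]
  -- block decomposition
  set x : Fin n → ℂ := fun i => u (Sum.inl i) with hx
  set y : Fin m → ℂ := fun j => u (Sum.inr j) with hy
  have hu' : u = Sum.elim x y := by funext s; cases s <;> rfl
  set Ac := A.map Complex.ofReal with hAc
  set Bc := B.map Complex.ofReal with hBc
  set Cc := C.map Complex.ofReal with hCc
  set Gc := G.map Complex.ofReal with hGc
  have hBT : Bᵀ.map Complex.ofReal = Bcᵀ := by ext i j; simp [hBc]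
  have hNB : (-B).map Complex.ofReal = -Bc := by ext i j; simp [hBc]
  have hD : (β • (1 : Matrix (Fin m) (Fin m) ℝ) + C).map Complex.ofReal
      = (β : ℂ) • 1 + Cc := by
    ext i j
    simp [hCc, Matrix.one_apply, apply_ite]
  have hmapA : (Matrix.fromBlocks A Bᵀ (-B) C).map Complex.ofReal
      = Matrix.fromBlocks Ac Bcᵀ (-Bc) Cc := by
    rw [Matrix.fromBlocks_map, hBT, hNB]
  have hmapP : P.map Complex.ofReal
      = Matrix.fromBlocks Ac Bcᵀ (-Bc) ((β : ℂ) • 1 + Cc) := by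
    rw [hP, Matrix.fromBlocks_map, hBT, hNB, hD]
  rw [hmapA, hmapP, hu', Matrix.fromBlocks_mulVec, Matrix.fromBlocks_mulVec] at hvec
  have E1 : Ac *ᵥ x + Bcᵀ *ᵥ y = lam • (Ac *ᵥ x + Bcᵀ *ᵥ y) := by
    funext i
    have := congrFun hvec (Sum.inl i)
    simpa using this
  have E2 : (-Bc) *ᵥ x + Cc *ᵥ y
      = lam • ((-Bc) *ᵥ x + (((β : ℂ) • 1 + Cc) *ᵥ y)) := by
    funext j
    have := congrFun hvec (Sum.inr j)
    simpa using this
  by_cases hlam : lam = 1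
  · subst hlam
    exact ⟨by simp, by simp, by simp, Or.inl rfl⟩
  · have h1l : (1 : ℂ) - lam ≠ 0 := sub_ne_zero_of_ne (Ne.symm hlam)
    have hE1' : Ac *ᵥ x + Bcᵀ *ᵥ y = 0 := by
      have h0 : (1 - lam) • (Ac *ᵥ x + Bcᵀ *ᵥ y) = 0 := by
        rw [sub_smul, one_smul, sub_eq_zero]
        exact E1
      rcases smul_eq_zero.mp h0 with h | h
      · exact absurd h h1l
      · exact h
    have hAx : Ac *ᵥ x = -(Bcᵀ *ᵥ y) := eq_neg_of_add_eq_zero_left hE1'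
    have hAcdet : IsUnit Ac.det := by
      rw [hAc, map_det_ofReal]
      exact isUnit_iff_ne_zero.mpr (Complex.ofReal_ne_zero.mpr hA.det_pos.ne')
    have hy0 : y ≠ 0 := by
      intro h
      apply hu0
      have hx0 : x = 0 := by
        have hAx0 : Ac *ᵥ x = 0 := by rw [hAx, h]; simp
        have : (Ac⁻¹ * Ac) *ᵥ x = 0 := by rw [← Matrix.mulVec_mulVec, hAx0, Matrix.mulVec_zero]
        rwa [Matrix.nonsing_inv_mul _ hAcdet, Matrix.one_mulVec] at this
      rw [hu', hx0, h]
      funext s; cases s <;> simp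
    have hBx : Bc *ᵥ x = -((B * A⁻¹ * Bᵀ).map Complex.ofReal *ᵥ y) := by
      have key : (B * A⁻¹).map Complex.ofReal * Ac = Bc := by
        rw [hAc, hBc, ← map_mul_ofReal,
          Matrix.mul_assoc, Matrix.nonsing_inv_mul _ hAdet, Matrix.mul_one]
      calc Bc *ᵥ x = (B * A⁻¹).map Complex.ofReal *ᵥ (Ac *ᵥ x) := by
            rw [Matrix.mulVec_mulVec, key]
        _ = (B * A⁻¹).map Complex.ofReal *ᵥ (-(Bcᵀ *ᵥ y)) := by rw [hAx]
        _ = -(((B * A⁻¹).map Complex.ofReal * Bcᵀ) *ᵥ y) := by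
            rw [Matrix.mulVec_neg, Matrix.mulVec_mulVec]
        _ = -((B * A⁻¹ * Bᵀ).map Complex.ofReal *ᵥ y) := by
            rw [map_mul_ofReal (B * A⁻¹) Bᵀ, hBT]
    have hGadd : Gc = Cc + (B * A⁻¹ * Bᵀ).map Complex.ofReal := by
      rw [hGc, hG, hCc]
      ext i j
      simp [Matrix.map_apply]
    have hGy : Gc *ᵥ y = lam • (Gc *ᵥ y + (β : ℂ) • y) := by
      have hL : (-Bc) *ᵥ x + Cc *ᵥ y = Gc *ᵥ y := by
        rw [Matrix.neg_mulVec, hBx, neg_neg, hGadd, Matrix.add_mulVec, add_comm]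
      have hR : (-Bc) *ᵥ x + ((β : ℂ) • 1 + Cc) *ᵥ y = Gc *ᵥ y + (β : ℂ) • y := by
        rw [Matrix.add_mulVec, Matrix.smul_mulVec, Matrix.one_mulVec,
          add_comm ((β : ℂ) • y) (Cc *ᵥ y), ← add_assoc, hL]
      rw [← hR, ← hL]
      exact E2
    set ν : ℂ := lam * (β : ℂ) / (1 - lam) with hν
    have h2 : (1 - lam) • (Gc *ᵥ y) = (lam * (β : ℂ)) • y := by
      rw [sub_smul, one_smul]
      nth_rewrite 1 [hGy]
      rw [smul_add, smul_smul]
      exact add_sub_cancel_left _ _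
    have hνy : Gc *ᵥ y = ν • y := by
      have h3 := congrArg (fun w => (1 - lam)⁻¹ • w) h2
      simp only [smul_smul, inv_mul_cancel₀ h1l, one_smul] at h3
      rw [h3]
      congr 1
      rw [hν, div_eq_mul_inv, mul_comm]
    obtain ⟨him, hpos, v, hv0, heig⟩ := real_eig G hGpd y hy0 ν hνy
    set μ : ℝ := ν.re with hμ
    have hνeq : ν = (μ : ℂ) := Complex.ext rfl (by simp [him])
    have hbm : (0 : ℝ) < β + μ := by linarith
    have hdiv : lam * (β : ℂ) / (1 - lam) = (μ : ℂ) := by rw [← hν]; exact hνeq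
    have hμβ : lam * (β : ℂ) = (μ : ℂ) * (1 - lam) := by
      rw [div_eq_iff h1l] at hdiv
      rw [hdiv]
    have hbm' : ((β : ℂ) + (μ : ℂ)) ≠ 0 := by
      have h4 : ((β + μ : ℝ) : ℂ) ≠ 0 := Complex.ofReal_ne_zero.mpr hbm.ne'
      push_cast at h4
      exact h4
    have hlamval : lam = ((μ / (β + μ) : ℝ) : ℂ) := by
      rw [Complex.ofReal_div]
      push_cast
      rw [eq_div_iff hbm']
      linear_combination hμβ
    refine ⟨?_, ?_, ?_, Or.inr ⟨μ, hpos, ⟨v, hv0, heig⟩, ?_⟩⟩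
    · rw [hlamval]; exact Complex.ofReal_im _
    · rw [hlamval, Complex.ofReal_re]
      exact div_pos hpos hbm
    · rw [hlamval, Complex.ofReal_re, div_le_one hbm]
      linarith
    · rw [hlamval]
      have h5 : ((μ / (β + μ) : ℝ) : ℂ) - 1 = ((μ / (β + μ) - 1 : ℝ) : ℂ) := by
        push_cast; ring
      rw [h5, Complex.norm_real, Real.norm_eq_abs]
      have h6 : μ / (β + μ) - 1 = -(β / (β + μ)) := by
        field_simp
        ring
      rw [h6, abs_neg, abs_of_pos (div_pos hβ hbm)]
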